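/- Let d ≥ 2, let q ∈ S, let c ∈ (−1, 1), and let H = {x ∈ ℝ^d : ⟨q,x⟩ = c} (a hyperplane meeting the interior of B, where q is the centre of one of the two solid caps into which H cuts B). Let U, W ⊆ S be sets satisfying: (a) ρ(u,q) ≤ ρ(w,q) for all u ∈ U and w ∈ W; and (b) ⟨q,w⟩ < c for all w ∈ W. Then for every u' ∈ conv(U), every w' ∈ conv(W) and every t ≥ 0 we have ⟨q, w' + t(w' − u')⟩ < c; in particular, the ray {w' + t(w' − u') : t ≥ 0} is disjoint from H and lies on the opposite side of H from q. -/

import Mathlib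

open scoped RealInnerProductSpace

/-- The spherical distance between two points of the unit sphere in `ℝ^d`:
the angle `arccos⟨x,y⟩ ∈ [0, π]`. -/
noncomputable def sphericalDist {d : ℕ} (x y : EuclideanSpace ℝ (Fin d)) : ℝ :=
  Real.arccos ⟪x, y⟫

/-- Let `H = {x : ⟨q,x⟩ = c}` be a hyperplane meeting the interior of the unit ball, with
`q ∈ S` the centre of one of the two caps it cuts off. If `U, W ⊆ S` are such that every
point of `U` is spherically at least as close to `q` as every point of `W`, and every point
of `W` lies strictly on the far side of `H` from `q`, then every ray starting in `conv(W)`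
and pointing away from a point of `conv(U)` stays strictly on the far side of `H`. -/
theorem ray_stays_on_far_side (d : ℕ) (hd : 2 ≤ d) (q : EuclideanSpace ℝ (Fin d))
    (hq : q ∈ Metric.sphere (0 : EuclideanSpace ℝ (Fin d)) 1) (c : ℝ)
    (hc : c ∈ Set.Ioo (-1 : ℝ) 1)
    (U W : Set (EuclideanSpace ℝ (Fin d)))
    (hU : U ⊆ Metric.sphere (0 : EuclideanSpace ℝ (Fin d)) 1)
    (hW : W ⊆ Metric.sphere (0 : EuclideanSpace ℝ (Fin d)) 1)
    (hUW : ∀ u ∈ U, ∀ w ∈ W, sphericalDist u q ≤ sphericalDist w q)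
    (hWside : ∀ w ∈ W, ⟪q, w⟫ < c) :
    ∀ u' ∈ convexHull ℝ U, ∀ w' ∈ convexHull ℝ W, ∀ t : ℝ, 0 ≤ t →
      ⟪q, w' + t • (w' - u')⟫ < c := by
  have hlin : IsLinearMap ℝ (fun x : EuclideanSpace ℝ (Fin d) => ⟪q, x⟫) :=
    ⟨fun x y => inner_add_right q x y, fun r x => real_inner_smul_right q x r⟩
  -- inner products are in [-1,1]
  have hmem : ∀ x ∈ Metric.sphere (0 : EuclideanSpace ℝ (Fin d)) 1,
      ⟪x, q⟫ ∈ Set.Icc (-1 : ℝ) 1 := by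
    intro x hx
    have h := abs_real_inner_le_norm x q
    rw [mem_sphere_iff_norm, sub_zero] at hx
    rw [mem_sphere_iff_norm, sub_zero] at hq
    rw [hx, hq] at h
    simpa [abs_le] using h
  -- pointwise: ⟪q,w⟫ ≤ ⟪q,u⟫
  have key : ∀ u ∈ U, ∀ w ∈ W, ⟪q, w⟫ ≤ ⟪q, u⟫ := by
    intro u hu w hw
    by_contra h
    push_neg at h
    have := Real.strictAntiOn_arccos (hmem u (hU hu)) (hmem w (hW hw))
      (by rwa [real_inner_comm u q, real_inner_comm w q] at h)
    exact absurd (hUW u hu w hw) (not_le.mpr this)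
  intro u' hu' w' hw' t ht
  -- ⟪q,w'⟫ < c
  have hw'c : ⟪q, w'⟫ < c := by
    have : convexHull ℝ W ⊆ {x | ⟪q, x⟫ < c} :=
      convexHull_min hWside (convex_halfSpace_lt hlin c)
    exact this hw'
  -- ⟪q,w'⟫ ≤ ⟪q,u'⟫
  have hle : ⟪q, w'⟫ ≤ ⟪q, u'⟫ := by
    have h1 : ∀ u ∈ U, ⟪q, w'⟫ ≤ ⟪q, u⟫ := by
      intro u hu
      have : convexHull ℝ W ⊆ {x | ⟪q, x⟫ ≤ ⟪q, u⟫} :=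
        convexHull_min (fun w hw => key u hu w hw) (convex_halfSpace_le hlin _)
      exact this hw'
    have : convexHull ℝ U ⊆ {x | ⟪q, w'⟫ ≤ ⟪q, x⟫} :=
      convexHull_min h1 (convex_halfSpace_ge hlin _)
    exact this hu'
  have : ⟪q, w' + t • (w' - u')⟫ = ⟪q, w'⟫ + t * (⟪q, w'⟫ - ⟪q, u'⟫) := by
    rw [inner_add_right, real_inner_smul_right, inner_sub_right]
  rw [this]
  nlinarith
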